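/- Let p > 3 be a prime with p ≡ 2 (mod 3), and let k ∈ ZMod p with k ≠ 0. Then the number of F_p-rational points, including the point at infinity, of the elliptic curve y² = x³ + k over F_p equals p + 1. -/

import Mathlib

/-- The number of `F_p`-rational points, including the point at infinity, of the elliptic curve
`y² = x³ + k` over `F_p`. -/
noncomputable def Npts (p : ℕ) (k : ZMod p) : ℕ :=
  Nat.card (WeierstrassCurve.Affine.Point
    (WeierstrassCurve.toAffine ⟨0, 0, 0, 0, k⟩))

section aux

variable {p : ℕ} (hp : p.Prime) (hp3 : 3 < p) (hpmod : p % 3 = 2)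

lemma cube_root_aux (hp : p.Prime) (hpmod : p % 3 = 2) (x : ZMod p) :
    (x ^ ((2 * p - 1) / 3)) ^ 3 = x := by
  haveI : Fact p.Prime := ⟨hp⟩
  have h3 : 3 ∣ 2 * p - 1 := by omega
  rw [← pow_mul, Nat.div_mul_cancel h3]
  rcases eq_or_ne x 0 with rfl | hx
  · rw [zero_pow]; omega
  · have h : 2 * p - 1 = (p - 1) * 2 + 1 := by have := hp.two_le; omega
    rw [h, pow_succ, pow_mul, ZMod.pow_card_sub_one_eq_one hx, one_pow, one_mul]

lemma cube_inj (hp : p.Prime) (hpmod : p % 3 = 2) : Function.Injective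
    (fun x : ZMod p => x ^ 3) := by
  haveI : Fact p.Prime := ⟨hp⟩
  have hsurj : Function.Surjective (fun x : ZMod p => x ^ 3) :=
    fun x => ⟨x ^ ((2 * p - 1) / 3), cube_root_aux hp hpmod x⟩
  exact (Finite.injective_iff_surjective).mpr hsurj

end aux

/-- Theorem 2.4(a): if `p > 3` is prime with `p ≡ 2 (mod 3)` and `k ≠ 0`, then the curve
`y² = x³ + k` has exactly `p + 1` points over `F_p`. -/
theorem stmt_1 (p : ℕ) (hp : p.Prime) (hp3 : 3 < p) (hpmod : p % 3 = 2)
    (k : ZMod p) (hk : k ≠ 0) : Npts p k = p + 1 := by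
  haveI : Fact p.Prime := ⟨hp⟩
  set W : WeierstrassCurve.Affine (ZMod p) := WeierstrassCurve.toAffine ⟨0, 0, 0, 0, k⟩ with hW
  have ha₁ : W.a₁ = 0 := rfl
  have ha₂ : W.a₂ = 0 := rfl
  have ha₃ : W.a₃ = 0 := rfl
  have ha₄ : W.a₄ = 0 := rfl
  have ha₆ : W.a₆ = k := rfl
  have hchar3 : (3 : ZMod p) ≠ 0 := by
    have : ((3 : ℕ) : ZMod p) ≠ 0 := by
      rw [Ne, ZMod.natCast_eq_zero_iff]
      intro h
      have := Nat.le_of_dvd (by norm_num) h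
      omega
    simpa using this
  have hchar2 : (2 : ZMod p) ≠ 0 := by
    have : ((2 : ℕ) : ZMod p) ≠ 0 := by
      rw [Ne, ZMod.natCast_eq_zero_iff]
      intro h
      have := Nat.le_of_dvd (by norm_num) h
      omega
    simpa using this
  -- every solution of the equation is nonsingular
  have hns : ∀ x y : ZMod p, W.Equation x y → W.Nonsingular x y := by
    intro x y heq
    rw [WeierstrassCurve.Affine.nonsingular_iff']
    refine ⟨heq, ?_⟩
    rw [WeierstrassCurve.Affine.equation_iff] at heq
    simp only [ha₁, ha₂, ha₃, ha₄, ha₆] at heq ⊢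
    by_contra hcon
    push_neg at hcon
    obtain ⟨h1, h2⟩ := hcon
    have hx : x = 0 := by
      have : 3 * x ^ 2 = 0 := by linear_combination -h1
      rcases mul_eq_zero.mp this with h | h
      · exact absurd h hchar3
      · exact pow_eq_zero_iff (by norm_num) |>.mp h
    have hy : y = 0 := by
      have : 2 * y = 0 := by linear_combination h2
      rcases mul_eq_zero.mp this with h | h
      · exact absurd h hchar2
      · exact h
    apply hk
    rw [hx, hy] at heq
    simpa using heq.symm
  -- the bijection
  let g : ZMod p → ZMod p := fun x => x ^ ((2 * p - 1) / 3)
  have hg : ∀ x : ZMod p, (g x) ^ 3 = x := cube_root_aux hp hpmod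
  have hinj := cube_inj hp hpmod
  let f : Option (ZMod p) → W.Point := fun o =>
    match o with
    | none => 0
    | some y => WeierstrassCurve.Affine.Point.some _ _ (hns (g (y ^ 2 - k)) y (by
        rw [WeierstrassCurve.Affine.equation_iff]
        simp only [ha₁, ha₂, ha₃, ha₄, ha₆]
        rw [hg]
        ring))
  have hf : Function.Bijective f := by
    constructor
    · rintro (_ | y₁) (_ | y₂) h
      · rfl
      · exact absurd (by simpa only [f] using h.symm)
          (WeierstrassCurve.Affine.Point.some_ne_zero _)
      · exact absurd (by simpa only [f] using h)
          (WeierstrassCurve.Affine.Point.some_ne_zero _)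
      · simp only [f, WeierstrassCurve.Affine.Point.some.injEq] at h
        exact congrArg _ h.2
    · rintro (_ | @⟨x, y, hxy⟩)
      · exact ⟨none, rfl⟩
      · refine ⟨some y, ?_⟩
        simp only [f]
        have heq := hxy.1
        rw [WeierstrassCurve.Affine.equation_iff] at heq
        simp only [ha₁, ha₂, ha₃, ha₄, ha₆] at heq
        have hx : g (y ^ 2 - k) = x := by
          apply hinj
          simp only
          rw [hg]
          linear_combination heq
        congr 1
  have : Npts p k = Nat.card (Option (ZMod p)) := (Nat.card_eq_of_bijective f hf).symm
  rw [this, Nat.card_eq_fintype_card, Fintype.card_option, ZMod.card]
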